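/- Let (x̄,ȳ) ∈ ℝⁿ×ℝᵐ be a local minimizer of (BPP) at which the lower level problem satisfies the local uniformly weak sharp minimum condition (LUWSMC). Then (BPP) is partially calm at (x̄,ȳ). -/

import Mathlib

open Filter Topology
open scoped ENNReal NNReal

/-- Optimal value function `φ(x) = inf { f(x,y) | g(x,y) ≤ 0 }`, an extended real. -/
noncomputable def phi {n m q : ℕ} (f : (Fin n → ℝ) → (Fin m → ℝ) → ℝ)
    (g : (Fin n → ℝ) → (Fin m → ℝ) → Fin q → ℝ) (x : Fin n → ℝ) : EReal :=
  sInf {v : EReal | ∃ y : Fin m → ℝ, (∀ i, g x y i ≤ 0) ∧ v = ((f x y : ℝ) : EReal)}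

/-- Lower level solution set `S(x) = argmin_y { f(x,y) | g(x,y) ≤ 0 }`. -/
def Sol {n m q : ℕ} (f : (Fin n → ℝ) → (Fin m → ℝ) → ℝ)
    (g : (Fin n → ℝ) → (Fin m → ℝ) → Fin q → ℝ) (x : Fin n → ℝ) : Set (Fin m → ℝ) :=
  {y | (∀ i, g x y i ≤ 0) ∧ ∀ z, (∀ i, g x z i ≤ 0) → f x y ≤ f x z}

/-- `(x̄,ȳ)` is a local minimizer of (BPP). -/
def IsLocalMinBPP {n m q : ℕ} (F : (Fin n → ℝ) → (Fin m → ℝ) → ℝ)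
    (X : Set (Fin n → ℝ)) (f : (Fin n → ℝ) → (Fin m → ℝ) → ℝ)
    (g : (Fin n → ℝ) → (Fin m → ℝ) → Fin q → ℝ)
    (xb : Fin n → ℝ) (yb : Fin m → ℝ) : Prop :=
  xb ∈ X ∧ yb ∈ Sol f g xb ∧
    ∃ ε : ℝ, 0 < ε ∧ ∀ x y, dist x xb < ε → dist y yb < ε → x ∈ X → y ∈ Sol f g x →
      F xb yb ≤ F x y

/-- (BPP) is partially calm at `(x̄,ȳ)`. -/
def PartiallyCalm {n m q : ℕ} (F : (Fin n → ℝ) → (Fin m → ℝ) → ℝ)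
    (X : Set (Fin n → ℝ)) (f : (Fin n → ℝ) → (Fin m → ℝ) → ℝ)
    (g : (Fin n → ℝ) → (Fin m → ℝ) → Fin q → ℝ)
    (xb : Fin n → ℝ) (yb : Fin m → ℝ) : Prop :=
  ∃ δ : ℝ, 0 < δ ∧ ∃ κ : ℝ, 0 < κ ∧ ∀ (x : Fin n → ℝ) (y : Fin m → ℝ) (u : ℝ),
    dist x xb ≤ δ → dist y yb ≤ δ → |u| ≤ δ → x ∈ X →
    ((f x y : ℝ) : EReal) - phi f g x ≤ ((u : ℝ) : EReal) → (∀ i, g x y i ≤ 0) →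
    F xb yb ≤ F x y + κ * |u|

/-- The lower level problem satisfies the local uniformly weak sharp minimum condition
(LUWSMC) at `(x̄,ȳ)`: `α·dist(y,S(x)) ≤ f(x,y) − φ(x)` for all feasible `(x,y)` near `(x̄,ȳ)`
(the distance to the empty set being `+∞`). -/
def LUWSMC {n m q : ℕ} (f : (Fin n → ℝ) → (Fin m → ℝ) → ℝ)
    (g : (Fin n → ℝ) → (Fin m → ℝ) → Fin q → ℝ)
    (xb : Fin n → ℝ) (yb : Fin m → ℝ) : Prop :=
  ∃ α : ℝ, 0 < α ∧ ∃ ε : ℝ, 0 < ε ∧ ∀ (x : Fin n → ℝ) (y : Fin m → ℝ),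
    (∀ i, g x y i ≤ 0) → dist x xb < ε → dist y yb < ε →
    ((α : ℝ) : EReal) * ((EMetric.infEdist y (Sol f g x) : ℝ≥0∞) : EReal) ≤
      ((f x y : ℝ) : EReal) - phi f g x

/-- Lemma 3.4: LUWSMC at a local minimizer of (BPP) implies partial calmness there. -/
theorem luwsmc_implies_partial_calmness {n m q : ℕ}
    (F : (Fin n → ℝ) → (Fin m → ℝ) → ℝ) (X : Set (Fin n → ℝ))
    (f : (Fin n → ℝ) → (Fin m → ℝ) → ℝ) (g : (Fin n → ℝ) → (Fin m → ℝ) → Fin q → ℝ)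
    (hF : LocallyLipschitz fun p : (Fin n → ℝ) × (Fin m → ℝ) => F p.1 p.2)
    (hXne : X.Nonempty) (hXcl : IsClosed X)
    (hf : Continuous fun p : (Fin n → ℝ) × (Fin m → ℝ) => f p.1 p.2)
    (hg : Continuous fun p : (Fin n → ℝ) × (Fin m → ℝ) => fun i => g p.1 p.2 i)
    (xb : Fin n → ℝ) (yb : Fin m → ℝ)
    (hmin : IsLocalMinBPP F X f g xb yb)
    (hlu : LUWSMC f g xb yb) :
    PartiallyCalm F X f g xb yb := by
  obtain ⟨hxbX, hybS, ε₀, hε₀, hloc⟩ := hmin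
  obtain ⟨α, hα, ε₁, hε₁, hlu'⟩ := hlu
  obtain ⟨K, t, ht, hlip⟩ := hF (xb, yb)
  obtain ⟨ρ, hρ, hball⟩ := Metric.mem_nhds_iff.mp ht
  set e : ℝ := min ε₀ (min ε₁ ρ) with he_def
  have he : 0 < e := lt_min hε₀ (lt_min hε₁ hρ)
  have hα1 : (0:ℝ) < α + 1 := by linarith
  set δ : ℝ := e * α / (2 * (α + 1)) with hδ_def
  have hδ : 0 < δ := by positivity
  have hδe : δ + δ / α = e / 2 := by
    field_simp [hδ_def]
    have h' : δ * (2 * (α + 1)) = e * α := by rw [hδ_def]; exact div_mul_cancel₀ _ (by positivity)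
    linear_combination h'
  have hδlt : δ < e := by
    have h1 : 0 < δ / α := by positivity
    have h2 : e / 2 < e := by linarith
    nlinarith
  refine ⟨δ, hδ, (K + 1) / α, by positivity, ?_⟩
  intro x y u hx hy hu hxX hfu hgy
  -- φ(x) ≤ f(x,y)
  have hphile : phi f g x ≤ ((f x y : ℝ) : EReal) := sInf_le ⟨y, hgy, rfl⟩
  have hphi_top : phi f g x ≠ ⊤ := fun h => by
    simp [h] at hphile
  have hphi_bot : phi f g x ≠ ⊥ := by
    intro h
    rw [h, EReal.coe_sub_bot] at hfu
    exact (EReal.coe_ne_top u) (top_le_iff.mp hfu)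
  set r : ℝ := (phi f g x).toReal with hr_def
  have hphir : phi f g x = ((r : ℝ) : EReal) := (EReal.coe_toReal hphi_top hphi_bot).symm
  have hrle : r ≤ f x y := by
    rw [hphir] at hphile; exact_mod_cast hphile
  have hfur : f x y - r ≤ u := by
    rw [hphir, ← EReal.coe_sub] at hfu; exact_mod_cast hfu
  have hu0 : 0 ≤ u := le_trans (by linarith) hfur
  have habs : |u| = u := abs_of_nonneg hu0
  -- apply LUWSMC
  have hxlt : dist x xb < ε₁ := lt_of_le_of_lt hx (hδlt.trans_le (le_trans (min_le_right _ _) (min_le_left _ _)))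
  have hylt : dist y yb < ε₁ := lt_of_le_of_lt hy (hδlt.trans_le (le_trans (min_le_right _ _) (min_le_left _ _)))
  have hsharp := hlu' x y hgy hxlt hylt
  rw [hphir, ← EReal.coe_sub] at hsharp
  set d : ℝ≥0∞ := EMetric.infEdist y (Sol f g x) with hd_def
  have hd_top : d ≠ ⊤ := by
    intro h
    rw [h, EReal.coe_ennreal_top, EReal.mul_top_of_pos (by exact_mod_cast hα)] at hsharp
    exact (EReal.coe_ne_top _) (top_le_iff.mp hsharp)
  -- Sol f g x is nonempty
  have hSne : (Sol f g x).Nonempty := by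
    rw [Set.nonempty_iff_ne_empty]
    intro h
    exact hd_top (by rw [hd_def, h]; exact Metric.infEDist_empty)
  -- convert the sharp inequality to reals
  have hdcoe : (d : EReal) = ((d.toReal : ℝ) : EReal) := by
    rw [← EReal.coe_toReal (x := (d : EReal)) (by simpa using hd_top) (by simp)]
    rw [EReal.toReal_coe_ennreal]
  have hdist_le : α * d.toReal ≤ f x y - r := by
    rw [hdcoe, ← EReal.coe_mul] at hsharp
    exact_mod_cast hsharp
  have hinfDist : Metric.infDist y (Sol f g x) = d.toReal := rfl
  have hdu : d.toReal ≤ u / α := by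
    rw [div_eq_inv_mul]
    have := le_trans hdist_le hfur
    calc d.toReal = α⁻¹ * (α * d.toReal) := by field_simp
      _ ≤ α⁻¹ * u := by
          apply mul_le_mul_of_nonneg_left (le_trans hdist_le hfur)
          positivity
  -- Sol f g x is closed
  have hgc : ∀ i, Continuous fun z => g x z i := fun i => by
    have : Continuous fun z : Fin m → ℝ => (fun p : (Fin n → ℝ) × (Fin m → ℝ) => fun j => g p.1 p.2 j) (x, z) :=
      hg.comp (Continuous.prodMk_right x)
    exact (continuous_apply i).comp this
  have hfc : ∀ w : Fin n → ℝ, Continuous fun z => f w z := fun w =>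
    hf.comp (Continuous.prodMk_right w)
  have hScl : IsClosed (Sol f g x) := by
    have h1 : IsClosed {z : Fin m → ℝ | ∀ i, g x z i ≤ 0} := by
      rw [Set.setOf_forall]
      exact isClosed_iInter fun i => isClosed_le (hgc i) continuous_const
    have h2 : IsClosed {z : Fin m → ℝ | ∀ w, (∀ i, g x w i ≤ 0) → f x z ≤ f x w} := by
      rw [Set.setOf_forall]
      refine isClosed_iInter fun w => ?_
      by_cases hw : ∀ i, g x w i ≤ 0
      · have hset : {z : Fin m → ℝ | (∀ i, g x w i ≤ 0) → f x z ≤ f x w}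
            = {z : Fin m → ℝ | f x z ≤ f x w} := by
          ext z; simp [hw]
        rw [hset]
        exact isClosed_le (hfc x) continuous_const
      · have hset : {z : Fin m → ℝ | (∀ i, g x w i ≤ 0) → f x z ≤ f x w} = Set.univ := by
          ext z; simp [hw]
        rw [hset]; exact isClosed_univ
    exact h1.inter h2
  -- pick nearest point z ∈ Sol f g x
  obtain ⟨z, hzS, hz⟩ := hScl.exists_infDist_eq_dist hSne y
  have hdyz : dist y z ≤ u / α := by rw [← hz, hinfDist]; exact hdu
  -- z is close to yb
  have hzyb : dist z yb ≤ e / 2 := by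
    have htri : dist z yb ≤ dist z y + dist y yb := dist_triangle z y yb
    rw [dist_comm z y] at htri
    have huδ : u ≤ δ := habs ▸ hu
    have h1 : u / α ≤ δ / α := by gcongr
    calc dist z yb ≤ dist y z + dist y yb := htri
      _ ≤ u / α + δ := add_le_add hdyz hy
      _ ≤ δ / α + δ := by linarith
      _ = e / 2 := by linarith [hδe]
  have heρ : e ≤ ρ := le_trans (min_le_right _ _) (min_le_right _ _)
  have heε₀ : e ≤ ε₀ := min_le_left _ _
  have he2 : e / 2 < e := by linarith
  -- local optimality at (x, z)
  have hFxz : F xb yb ≤ F x z := by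
    refine hloc x z ?_ ?_ hxX hzS
    · exact lt_of_le_of_lt hx (hδlt.trans_le heε₀)
    · exact lt_of_le_of_lt hzyb (he2.trans_le heε₀)
  -- Lipschitz estimate between (x,z) and (x,y)
  have hxzball : ((x, z) : (Fin n → ℝ) × (Fin m → ℝ)) ∈ t := by
    apply hball
    rw [Metric.mem_ball, Prod.dist_eq]
    exact max_lt (lt_of_le_of_lt hx (hδlt.trans_le heρ)) (lt_of_le_of_lt hzyb (he2.trans_le heρ))
  have hxyball : ((x, y) : (Fin n → ℝ) × (Fin m → ℝ)) ∈ t := by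
    apply hball
    rw [Metric.mem_ball, Prod.dist_eq]
    exact max_lt (lt_of_le_of_lt hx (hδlt.trans_le heρ)) (lt_of_le_of_lt hy (hδlt.trans_le heρ))
  have hlipd : dist (F x z) (F x y) ≤ K * dist (x, z) ((x, y) : (Fin n → ℝ) × (Fin m → ℝ)) :=
    LipschitzOnWith.dist_le_mul hlip (x, z) hxzball (x, y) hxyball
  have hdprod : dist ((x, z) : (Fin n → ℝ) × (Fin m → ℝ)) (x, y) = dist z y := by
    rw [Prod.dist_eq]
    simp [dist_nonneg]
  have hFzy : F x z ≤ F x y + K * dist z y := by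
    rw [hdprod] at hlipd
    have h' : |F x z - F x y| ≤ (K : ℝ) * dist z y := by
      rw [← Real.dist_eq]; exact hlipd
    have h2 := le_trans (le_abs_self (F x z - F x y)) h'
    linarith
  -- combine
  have hKd : (K : ℝ) * dist z y ≤ (K + 1) / α * |u| := by
    rw [habs, dist_comm z y]
    have h1 : (K : ℝ) * dist y z ≤ (K : ℝ) * (u / α) :=
      mul_le_mul_of_nonneg_left hdyz K.coe_nonneg
    have h2 : (K : ℝ) * (u / α) ≤ (K + 1) * (u / α) := by
      apply mul_le_mul_of_nonneg_right (by linarith) (by positivity)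
    calc (K : ℝ) * dist y z ≤ (K + 1) * (u / α) := le_trans h1 h2
      _ = (K + 1) / α * u := by ring
  linarith [hFxz, hFzy, hKd]
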